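/- Let G = (V,E) be a hypergraph that contains a simple cycle, and let ℓ denote the minimum length of a simple cycle in G. If ℓ ≥ 4, then there exists a hypergraph G', obtained from G by a finite sequence of node-expansion and node-contraction operations, that contains a simple cycle of length at most ℓ − 1. -/

import Mathlib

open Finset

namespace BPO

variable {N : Type*} [DecidableEq N]

/-- Coordinate index set of `ℝ^{V ∪ E}`: one coordinate for each edge, and one
coordinate (labelled by the corresponding singleton) for each node. -/
def coords (V : Finset N) (E : Finset (Finset N)) : Finset (Finset N) :=
  E ∪ V.image fun v => {v}

/-- A point of `ℝ^{V ∪ E}`. -/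
abbrev Pt (V : Finset N) (E : Finset (Finset N)) : Type _ :=
  {p : Finset N // p ∈ coords V E} → ℝ

/-- Evaluate a coordinate of a point, with the convention `z_∅ = 1`.
For a node `v`, the coordinate `z_v` is `ev z {v}`. -/
noncomputable def ev {V : Finset N} {E : Finset (Finset N)} (z : Pt V E)
    (p : Finset N) : ℝ :=
  if h : p ∈ coords V E then z ⟨p, h⟩ else if p = ∅ then 1 else 0

/-- The multilinear set `S(G)`: binary points with `z_e = ∏_{v ∈ e} z_v`. -/
def mlSet (V : Finset N) (E : Finset (Finset N)) : Set (Pt V E) :=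
  { z | (∀ p, z p = 0 ∨ z p = 1) ∧ ∀ e ∈ E, ev z e = ∏ v ∈ e, ev z {v} }

/-- The multilinear polytope `MP(G)`. -/
noncomputable def MP (V : Finset N) (E : Finset (Finset N)) : Set (Pt V E) :=
  convexHull ℝ (mlSet V E)

/-- The completion `cl(E) = { f ⊆ e : |f| ≥ 2, e ∈ E }`. -/
def clE (E : Finset (Finset N)) : Finset (Finset N) :=
  (E.biUnion Finset.powerset).filter fun g => 2 ≤ g.card

/-- The set of maximal edges of `E`. -/
def maxEdges (E : Finset (Finset N)) : Finset (Finset N) :=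
  E.filter fun e => ∀ e' ∈ E, e ⊆ e' → e = e'

/-- The linear function `ψ(U, e)`. -/
noncomputable def psi {V : Finset N} {E : Finset (Finset N)} (z : Pt V E)
    (U e : Finset N) : ℝ :=
  ∑ W ∈ U.powerset, (if Even W.card then (1 : ℝ) else -1) * ev z ((e \ U) ∪ W)

/-- The complete edge relaxation constraints (`ψ(U,e) ≥ 0` for `U ⊆ e`, `e` a
maximal edge of `E`), imposed on the coordinate space `ℝ^{V ∪ F}`. -/
noncomputable def cerSet (V : Finset N) (E F : Finset (Finset N)) : Set (Pt V F) :=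
  { z | ∀ e ∈ maxEdges E, ∀ U ⊆ e, 0 ≤ psi z U e }

/-- The complete edge relaxation `CER(G) ⊆ ℝ^{V ∪ cl(E)}`. -/
noncomputable def CER (V : Finset N) (E : Finset (Finset N)) : Set (Pt V (clE E)) :=
  cerSet V E (clE E)

/-- Projection onto the coordinates of `ℝ^{V₂ ∪ E₂}`. -/
noncomputable def res (V₂ : Finset N) (E₂ : Finset (Finset N)) {V₁ : Finset N}
    {E₁ : Finset (Finset N)} (z : Pt V₁ E₁) : Pt V₂ E₂ :=
  fun p => ev z p.1

/-- `CER(G)` is an extension of `MP(G)`: `MP(G)` is the image of `CER(G)` under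
the projection of `ℝ^{V ∪ cl(E)}` onto `ℝ^{V ∪ E}`. -/
def IsExtension (V : Finset N) (E : Finset (Finset N)) : Prop :=
  MP V E = (fun z : Pt V (clE E) => res V E z) '' CER V E

/-- The running intersection property for the family `E`. -/
def RunningIntersection (E : Finset (Finset N)) : Prop :=
  ∃ L : List (Finset N), L.Nodup ∧ L.toFinset = E ∧
    ∀ k, 0 < k → k < L.length →
      ∃ j < k, L.getD k ∅ ∩ (L.take k).foldr (· ∪ ·) ∅ ⊆ L.getD j ∅

/-- A hypergraph is α-acyclic if its edge set has the running intersection property. -/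
def AlphaAcyclic (E : Finset (Finset N)) : Prop := RunningIntersection E

/-- `s_i = e_i ∩ e_{i+1}` for a cyclic sequence `e_1, …, e_ℓ, e_{ℓ+1} = e_1`. -/
def cycS (c : ℕ → Finset N) (ℓ i : ℕ) : Finset N :=
  c i ∩ c (if i = ℓ then 1 else i + 1)

/-- A simple cycle `e_1, …, e_ℓ, e_{ℓ+1} = e_1` of length `ℓ`. -/
def IsSimpleCycle (E : Finset (Finset N)) (ℓ : ℕ) (c : ℕ → Finset N) : Prop :=
  3 ≤ ℓ ∧ (∀ i, 1 ≤ i → i ≤ ℓ → c i ∈ E) ∧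
    ∀ i j k, 1 ≤ i → i < j → j < k → k ≤ ℓ → ∀ e ∈ E,
      ((cycS c ℓ i ∪ cycS c ℓ j ∪ cycS c ℓ k) \ e).Nonempty

/-- An α-cycle `e_1, …, e_ℓ, e_{ℓ+1} = e_1` of length `ℓ`. -/
def IsAlphaCycle (E : Finset (Finset N)) (ℓ : ℕ) (c : ℕ → Finset N) : Prop :=
  3 ≤ ℓ ∧ (∀ i, 1 ≤ i → i ≤ ℓ → c i ∈ E) ∧
    (∀ i j, 1 ≤ i → i ≤ ℓ → 1 ≤ j → j ≤ ℓ → i ≠ j → (c i \ c j).Nonempty) ∧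
    ∀ i, 1 ≤ i → i ≤ ℓ → ∀ e ∈ E,
      ((cycS c ℓ (if i = 1 then ℓ else i - 1) ∪ cycS c ℓ i ∪
        cycS c ℓ (if i = ℓ then 1 else i + 1)) \ e).Nonempty

/-- A chordless α-cycle: no subsequence `e_i, …, e_j, ẽ, e_i` is an α-cycle. -/
def Chordless (E : Finset (Finset N)) (ℓ : ℕ) (c : ℕ → Finset N) : Prop :=
  ∀ i j, 1 ≤ i → i < j → j ≤ ℓ → j - i ≤ ℓ - 3 →
    ∀ g ∈ E, (∀ k, i ≤ k → k ≤ j → g ≠ c k) →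
      ¬ IsAlphaCycle E (j - i + 2) fun k => if k ≤ j - i + 1 then c (i + k - 1) else g

/-- The edge set `E_{V'}` of the subhypergraph induced by `W`. -/
def indE (E : Finset (Finset N)) (W : Finset N) : Finset (Finset N) :=
  (E.image fun e => e ∩ W).filter fun g => 2 ≤ g.card

/-- The edge set `E_{w→u}` obtained by contracting `w` to `u`. -/
def contrE (E : Finset (Finset N)) (u w : N) : Finset (Finset N) :=
  E.filter (fun e => w ∉ e) ∪
    (E.filter fun e => w ∈ e ∧ e ≠ {u, w}).image fun e => e.erase w ∪ {u}

/-- The edge set `E'` obtained by expanding `w` to `f`. -/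
def expE (E : Finset (Finset N)) (w : N) (f : Finset N) : Finset (Finset N) :=
  insert f
    (E.filter (fun e => w ∉ e) ∪ (E.filter fun e => w ∈ e).image fun e => e.erase w ∪ f)

/-- The coordinate renaming `x_w → z_f`, `x_v → z_v`, `x_e → z_e` (`w ∉ e`),
`x_e → z_{(e∖{w}) ⊎ f}` (`w ∈ e`) used in the expansion operation. -/
def expRen (w : N) (f : Finset N) (p : Finset N) : Finset N :=
  if p = {w} then f else if w ∈ p then p.erase w ∪ f else p

/-- A single node-expansion or node-contraction step between hypergraphs. -/
inductive Step {N : Type*} [DecidableEq N] :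
    Finset N × Finset (Finset N) → Finset N × Finset (Finset N) → Prop
  | expand (V : Finset N) (E : Finset (Finset N)) (w : N) (f : Finset N)
      (hw : w ∈ V) (hf : f.Nonempty) (hd : Disjoint f V) :
      Step (V, E) (V.erase w ∪ f, expE E w f)
  | contract (V : Finset N) (E : Finset (Finset N)) (u w : N)
      (hu : u ∈ V) (hw : w ∈ V) (huw : u ≠ w) (he : ∃ e ∈ E, u ∈ e ∧ w ∈ e) :
      Step (V, E) (V.erase w, contrE E u w)


/-! ### Auxiliary machinery for Statement 15 -/

section Stmt15Aux

variable {E : Finset (Finset N)} {ℓ : ℕ} {c : ℕ → Finset N}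

lemma cycS_of_ne {c : ℕ → Finset N} {m i : ℕ} (h : i ≠ m) :
    cycS c m i = c i ∩ c (i + 1) := by
  unfold cycS; rw [if_neg h]

lemma cycS_self (c : ℕ → Finset N) (m : ℕ) : cycS c m m = c m ∩ c 1 := by
  unfold cycS; rw [if_pos rfl]

lemma cycS_subset_fst (c : ℕ → Finset N) (m i : ℕ) : cycS c m i ⊆ c i := by
  unfold cycS; exact Finset.inter_subset_left

lemma cycS_subset_snd {c : ℕ → Finset N} {m i : ℕ} (h : i ≠ m) :
    cycS c m i ⊆ c (i + 1) := by
  rw [cycS_of_ne h]; exact Finset.inter_subset_right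

lemma cycS_last_subset (c : ℕ → Finset N) (m : ℕ) : cycS c m m ⊆ c 1 := by
  rw [cycS_self]; exact Finset.inter_subset_right

lemma nonempty_sdiff_mono {A B e : Finset N} (hAB : A ⊆ B) (h : (A \ e).Nonempty) :
    (B \ e).Nonempty :=
  h.mono (Finset.sdiff_subset_sdiff hAB (le_refl e))

/-- A "locally good" cyclic list of edges: all interior consecutive corner
triples escape every edge. -/
def LG (E : Finset (Finset N)) (m : ℕ) (c : ℕ → Finset N) : Prop :=
  3 ≤ m ∧ (∀ i, 1 ≤ i → i ≤ m → c i ∈ E) ∧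
    ∀ y, 1 ≤ y → y + 2 ≤ m → ∀ e ∈ E,
      ((cycS c m y ∪ cycS c m (y + 1) ∪ cycS c m (y + 2)) \ e).Nonempty

lemma pair_lemma (h : LG E ℓ c) :
    ∀ d a g, 2 ≤ d → 1 ≤ a → a + d ≤ ℓ → g ∈ E →
      cycS c ℓ a ⊆ g → cycS c ℓ (a + d) ⊆ g →
      ∃ m' c', 3 ≤ m' ∧ m' ≤ d + 1 ∧ IsSimpleCycle E m' c' := by
  intro d
  induction d using Nat.strong_induction_on with
  | _ d IH =>
  intro a g hd ha hab hg hsub1 hsub2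
  classical
  set B : ℕ → Finset N := fun t => if t ≤ d then c (a + t) else g with hB
  have hBmem : ∀ i, 1 ≤ i → i ≤ d + 1 → B i ∈ E := by
    intro i hi1 hi2
    by_cases hi : i ≤ d
    · simp only [hB, if_pos hi]
      exact h.2.1 (a + i) (by omega) (by omega)
    · simp only [hB, if_neg hi]; exact hg
  -- lower bounds on the corner sets of B
  have hσ1 : ∀ t, 1 ≤ t → t + 1 ≤ d → cycS c ℓ (a + t) ⊆ cycS B (d + 1) t := by
    intro t ht1 ht2
    rw [cycS_of_ne (by omega : t ≠ d + 1)]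
    simp only [hB, if_pos (by omega : t ≤ d), if_pos (by omega : t + 1 ≤ d)]
    rw [cycS_of_ne (by omega : a + t ≠ ℓ), show a + (t + 1) = a + t + 1 by omega]
  have hσ2 : cycS c ℓ (a + d) ⊆ cycS B (d + 1) d := by
    rw [cycS_of_ne (by omega : d ≠ d + 1)]
    simp only [hB, if_pos (le_refl d), if_neg (by omega : ¬ d + 1 ≤ d)]
    exact Finset.subset_inter (cycS_subset_fst c ℓ (a + d)) hsub2
  have hσ3 : cycS c ℓ a ⊆ cycS B (d + 1) (d + 1) := by
    rw [cycS_self]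
    simp only [hB, if_neg (by omega : ¬ d + 1 ≤ d), if_pos (by omega : 1 ≤ d)]
    refine Finset.subset_inter hsub1 ?_
    rw [cycS_of_ne (by omega : a ≠ ℓ)]; exact Finset.inter_subset_right
  by_cases hsimp : ∀ i j k, 1 ≤ i → i < j → j < k → k ≤ d + 1 → ∀ e ∈ E,
      ((cycS B (d+1) i ∪ cycS B (d+1) j ∪ cycS B (d+1) k) \ e).Nonempty
  · exact ⟨d + 1, B, by omega, le_refl _, by omega, hBmem, hsimp⟩
  · push_neg at hsimp
    obtain ⟨p, q, r, hp, hpq, hqr, hr, e, he, hbad⟩ := hsimp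
    rw [Finset.sdiff_eq_empty_iff_subset] at hbad
    have hPe : cycS B (d+1) p ⊆ e :=
      (Finset.subset_union_left.trans Finset.subset_union_left).trans hbad
    have hQe : cycS B (d+1) q ⊆ e :=
      (Finset.subset_union_right.trans Finset.subset_union_left).trans hbad
    have hRe : cycS B (d+1) r ⊆ e := Finset.subset_union_right.trans hbad
    -- helper closing the goal from a sorted triple of original corner sets inside e
    have key : ∀ A g1 g2, 1 ≤ A → 1 ≤ g1 → 1 ≤ g2 → g1 + 1 ≤ d → g2 + 1 ≤ d →
        A + g1 + g2 ≤ ℓ → cycS c ℓ A ⊆ e → cycS c ℓ (A + g1) ⊆ e →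
        cycS c ℓ (A + g1 + g2) ⊆ e →
        ∃ m' c', 3 ≤ m' ∧ m' ≤ d + 1 ∧ IsSimpleCycle E m' c' := by
      intro A g1 g2 hA hg1 hg2 hg1d hg2d hAm hA1 hA2 hA3
      rcases Nat.lt_or_ge g1 2 with h1 | h1
      · rcases Nat.lt_or_ge g2 2 with h2 | h2
        · -- g1 = g2 = 1 : contradiction with local goodness
          have e1 : g1 = 1 := by omega
          have e2 : g2 = 1 := by omega
          subst e1; subst e2
          obtain ⟨x, hx⟩ := h.2.2 A hA (by omega) e he
          rw [Finset.mem_sdiff] at hx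
          rcases Finset.mem_union.1 hx.1 with hx' | hx'
          · rcases Finset.mem_union.1 hx' with hx'' | hx''
            · exact absurd (hA1 hx'') hx.2
            · exact absurd (hA2 hx'') hx.2
          · exact absurd (hA3 hx') hx.2
        · obtain ⟨m', c', h3, hle, hsc⟩ :=
            IH g2 (by omega) (A + g1) e h2 (by omega) (by omega) he hA2 hA3
          exact ⟨m', c', h3, by omega, hsc⟩
      · obtain ⟨m', c', h3, hle, hsc⟩ :=
          IH g1 (by omega) A e h1 hA (by omega) he hA1 hA2
        exact ⟨m', c', h3, by omega, hsc⟩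
    by_cases hr1 : r ≤ d
    · -- all three indices map into [a+1, a+d]
      have hιp : cycS c ℓ (a + p) ⊆ e := by
        refine subset_trans ?_ hPe
        exact hσ1 p hp (by omega)
      have hιq : cycS c ℓ (a + q) ⊆ e := by
        by_cases hq : q ≤ d - 1
        · exact (hσ1 q (by omega) (by omega)).trans hQe
        · have : q = d := by omega
          subst this; exact hσ2.trans hQe
      have hιr : cycS c ℓ (a + r) ⊆ e := by
        by_cases hrr : r ≤ d - 1
        · exact (hσ1 r (by omega) (by omega)).trans hRe
        · have : r = d := by omega
          subst this; exact hσ2.trans hRe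
      have h2 : a + p + (q - p) = a + q := by omega
      have h3 : a + p + (q - p) + (r - q) = a + r := by omega
      refine key (a + p) (q - p) (r - q) (by omega) (by omega) (by omega)
        (by omega) (by omega) (by omega) hιp ?_ ?_
      · rw [h2]; exact hιq
      · rw [h3]; exact hιr
    · -- r = d + 1
      have hre : r = d + 1 := by omega
      subst hre
      have hιr : cycS c ℓ a ⊆ e := hσ3.trans hRe
      have hιp : cycS c ℓ (a + p) ⊆ e := (hσ1 p hp (by omega)).trans hPe
      have hιq : cycS c ℓ (a + q) ⊆ e := by
        by_cases hq : q ≤ d - 1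
        · exact (hσ1 q (by omega) (by omega)).trans hQe
        · have : q = d := by omega
          subst this; exact hσ2.trans hQe
      have h2 : a + p = a + 0 + p := by omega
      refine key a p (q - p) ha hp (by omega) (by omega) (by omega) (by omega)
        hιr hιp ?_
      · rw [show a + p + (q - p) = a + q by omega]; exact hιq

lemma LG_to_simple (h : LG E ℓ c) :
    ∃ m' c', 3 ≤ m' ∧ m' ≤ ℓ ∧ IsSimpleCycle E m' c' := by
  classical
  by_cases hs : ∀ i j k, 1 ≤ i → i < j → j < k → k ≤ ℓ → ∀ e ∈ E,
      ((cycS c ℓ i ∪ cycS c ℓ j ∪ cycS c ℓ k) \ e).Nonempty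
  · exact ⟨ℓ, c, h.1, le_refl _, h.1, h.2.1, hs⟩
  · push_neg at hs
    obtain ⟨i, j, k, hi, hij, hjk, hk, e, he, hbad⟩ := hs
    rw [Finset.sdiff_eq_empty_iff_subset] at hbad
    have hie : cycS c ℓ i ⊆ e :=
      (Finset.subset_union_left.trans Finset.subset_union_left).trans hbad
    have hje : cycS c ℓ j ⊆ e :=
      (Finset.subset_union_right.trans Finset.subset_union_left).trans hbad
    have hke : cycS c ℓ k ⊆ e := Finset.subset_union_right.trans hbad
    rcases Nat.lt_or_ge (j - i) 2 with h1 | h1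
    · rcases Nat.lt_or_ge (k - j) 2 with h2 | h2
      · -- consecutive triple: contradiction with LG
        have hj : j = i + 1 := by omega
        have hkk : k = i + 2 := by omega
        subst hj; subst hkk
        obtain ⟨x, hx⟩ := h.2.2 i hi (by omega) e he
        rw [Finset.mem_sdiff] at hx
        rcases Finset.mem_union.1 hx.1 with hx' | hx'
        · rcases Finset.mem_union.1 hx' with hx'' | hx''
          · exact absurd (hie hx'') hx.2
          · exact absurd (hje hx'') hx.2
        · exact absurd (hke hx') hx.2
      · obtain ⟨m', c', h3, hle, hsc⟩ := pair_lemma h (k - j) j e h2 (by omega)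
          (by omega) he hje (by rw [show j + (k - j) = k by omega]; exact hke)
        exact ⟨m', c', h3, by omega, hsc⟩
    · obtain ⟨m', c', h3, hle, hsc⟩ := pair_lemma h (j - i) i e h1 hi
        (by omega) he hie (by rw [show i + (j - i) = j by omega]; exact hje)
      exact ⟨m', c', h3, by omega, hsc⟩

end Stmt15Aux

section Stmt15Aux2

variable {E : Finset (Finset N)} {ℓ : ℕ} {c : ℕ → Finset N}

/-- Total size of the corner sets of a cycle. -/
def Ssum (ℓ : ℕ) (c : ℕ → Finset N) : ℕ :=
  ∑ i ∈ Finset.Icc 1 ℓ, (cycS c ℓ i).card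

/-- Rigidity of Σ-maximal minimum cycles under chordal replacement. -/
lemma replace_rigid (hC : IsSimpleCycle E ℓ c)
    (hmax : ∀ c', IsSimpleCycle E ℓ c' → Ssum ℓ c' ≤ Ssum ℓ c)
    {a : ℕ} (ha1 : 1 ≤ a) (ha2 : a + 2 ≤ ℓ) {g : Finset N} (hg : g ∈ E)
    (h1 : cycS c ℓ a ⊆ g) (h2 : cycS c ℓ (a + 1) ⊆ g) :
    c a ∩ g = cycS c ℓ a ∧ g ∩ c (a + 2) = cycS c ℓ (a + 1) := by
  classical
  have hl3 : 3 ≤ ℓ := hC.1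
  set Cg : ℕ → Finset N := fun t => if t = a + 1 then g else c t with hCg
  have hmem : ∀ i, 1 ≤ i → i ≤ ℓ → Cg i ∈ E := by
    intro i hi1 hi2
    by_cases hia : i = a + 1
    · simp only [hCg, if_pos hia]; exact hg
    · simp only [hCg, if_neg hia]; exact hC.2.1 i hi1 hi2
  have hother : ∀ i, 1 ≤ i → i ≤ ℓ → i ≠ a → i ≠ a + 1 → cycS Cg ℓ i = cycS c ℓ i := by
    intro i hi1 hi2 hia hia1
    by_cases hil : i = ℓ
    · subst hil
      rw [cycS_self, cycS_self]
      simp only [hCg, if_neg hia1, if_neg (by omega : (1:ℕ) ≠ a + 1)]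
    · rw [cycS_of_ne hil, cycS_of_ne hil]
      simp only [hCg, if_neg hia1, if_neg (by intro h'; omega : i + 1 ≠ a + 1)]
  have hsa : cycS Cg ℓ a = c a ∩ g := by
    rw [cycS_of_ne (by omega : a ≠ ℓ)]
    simp only [hCg, if_neg (by omega : a ≠ a + 1), if_pos rfl]
  have hsa1 : cycS Cg ℓ (a + 1) = g ∩ c (a + 2) := by
    rw [cycS_of_ne (by omega : a + 1 ≠ ℓ)]
    simp only [hCg, if_pos rfl, if_neg (by omega : a + 1 + 1 ≠ a + 1)]
  have hsup : ∀ i, 1 ≤ i → i ≤ ℓ → cycS c ℓ i ⊆ cycS Cg ℓ i := by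
    intro i hi1 hi2
    by_cases hia : i = a
    · subst hia
      rw [hsa]
      exact Finset.subset_inter (cycS_subset_fst c ℓ i) h1
    · by_cases hia1 : i = a + 1
      · subst hia1
        rw [hsa1]
        refine Finset.subset_inter h2 ?_
        have := cycS_subset_snd (c := c) (m := ℓ) (i := a + 1) (by omega)
        rwa [show a + 1 + 1 = a + 2 by omega] at this
      · rw [hother i hi1 hi2 hia hia1]
  have hsimple : IsSimpleCycle E ℓ Cg := by
    refine ⟨hl3, hmem, ?_⟩
    intro i j k hi hij hjk hk e he
    refine nonempty_sdiff_mono ?_ (hC.2.2 i j k hi hij hjk hk e he)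
    exact Finset.union_subset_union (Finset.union_subset_union
      (hsup i hi (by omega)) (hsup j (by omega) (by omega))) (hsup k (by omega) hk)
  have hpt : ∀ i ∈ Finset.Icc 1 ℓ, (cycS c ℓ i).card = (cycS Cg ℓ i).card := by
    have hle : ∀ i ∈ Finset.Icc 1 ℓ, (cycS c ℓ i).card ≤ (cycS Cg ℓ i).card := by
      intro i hi
      rw [Finset.mem_Icc] at hi
      exact Finset.card_le_card (hsup i hi.1 hi.2)
    have hsumle : Ssum ℓ c ≤ Ssum ℓ Cg := Finset.sum_le_sum hle
    have hsumeq : Ssum ℓ c = Ssum ℓ Cg := le_antisymm hsumle (hmax Cg hsimple)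
    exact (Finset.sum_eq_sum_iff_of_le hle).1 hsumeq
  constructor
  · rw [← hsa]
    symm
    refine Finset.eq_of_subset_of_card_le (hsup a ha1 (by omega)) ?_
    exact le_of_eq (hpt a (Finset.mem_Icc.2 ⟨ha1, by omega⟩)).symm
  · rw [← hsa1]
    symm
    refine Finset.eq_of_subset_of_card_le (hsup (a+1) (by omega) (by omega)) ?_
    exact le_of_eq (hpt (a+1) (Finset.mem_Icc.2 ⟨by omega, by omega⟩)).symm

/-- The reversed cycle, fixing `e₁`. -/
def revC (ℓ : ℕ) (c : ℕ → Finset N) : ℕ → Finset N :=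
  fun t => if t = 1 then c 1 else c (ℓ + 2 - t)

lemma cycS_revC (hl : 3 ≤ ℓ) {i : ℕ} (hi1 : 1 ≤ i) (hi2 : i ≤ ℓ) :
    cycS (revC ℓ c) ℓ i = cycS c ℓ (ℓ + 1 - i) := by
  by_cases hil : i = ℓ
  · rw [hil, show ℓ + 1 - ℓ = 1 by omega, cycS_self, cycS_of_ne (by omega : 1 ≠ ℓ)]
    simp only [revC, if_neg (by omega : ℓ ≠ 1), if_pos rfl]
    rw [show ℓ + 2 - ℓ = 2 by omega, show (1 : ℕ) + 1 = 2 by norm_num]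
    exact Finset.inter_comm _ _
  · by_cases hi1' : i = 1
    · rw [hi1', show ℓ + 1 - 1 = ℓ by omega, cycS_of_ne (by omega : 1 ≠ ℓ), cycS_self]
      simp only [revC, if_pos rfl, if_neg (by omega : (1:ℕ) + 1 ≠ 1)]
      rw [show (1:ℕ) + 1 = 2 by norm_num, show ℓ + 2 - 2 = ℓ by omega]
      exact Finset.inter_comm _ _
    · rw [cycS_of_ne hil, cycS_of_ne (by omega : ℓ + 1 - i ≠ ℓ)]
      simp only [revC, if_neg hi1', if_neg (by omega : i + 1 ≠ 1)]
      rw [show ℓ + 2 - (i + 1) = ℓ + 1 - i by omega,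
        show ℓ + 1 - i + 1 = ℓ + 2 - i by omega]
      exact Finset.inter_comm _ _

lemma revC_simple (hC : IsSimpleCycle E ℓ c) : IsSimpleCycle E ℓ (revC ℓ c) := by
  obtain ⟨hl3, hmem, hS⟩ := hC
  refine ⟨hl3, ?_, ?_⟩
  · intro i hi1 hi2
    by_cases hi : i = 1
    · simp only [revC, if_pos hi]; exact hmem 1 le_rfl (by omega)
    · simp only [revC, if_neg hi]; exact hmem (ℓ + 2 - i) (by omega) (by omega)
  · intro i j k hi hij hjk hk e he
    have h1 := cycS_revC (c := c) hl3 hi (by omega : i ≤ ℓ)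
    have h2 := cycS_revC (c := c) hl3 (by omega : 1 ≤ j) (by omega : j ≤ ℓ)
    have h3 := cycS_revC (c := c) hl3 (by omega : 1 ≤ k) hk
    rw [h1, h2, h3]
    have hs := hS (ℓ + 1 - k) (ℓ + 1 - j) (ℓ + 1 - i) (by omega) (by omega)
      (by omega) (by omega) e he
    refine nonempty_sdiff_mono ?_ hs
    intro x hx
    simp only [Finset.mem_union] at hx ⊢
    tauto

lemma revC_Ssum (hl : 3 ≤ ℓ) : Ssum ℓ (revC ℓ c) = Ssum ℓ c := by
  unfold Ssum
  rw [Finset.sum_nbij' (i := fun t => ℓ + 1 - t) (j := fun t => ℓ + 1 - t)]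
  · intro a ha
    rw [Finset.mem_Icc] at ha ⊢
    omega
  · intro a ha
    rw [Finset.mem_Icc] at ha ⊢
    omega
  · intro a ha
    rw [Finset.mem_Icc] at ha
    omega
  · intro a ha
    rw [Finset.mem_Icc] at ha
    omega
  · intro a ha
    rw [Finset.mem_Icc] at ha
    rw [cycS_revC hl ha.1 ha.2]

/-- If `s_ℓ ⊆ e₂` then dropping `e₁` gives a shorter simple cycle. -/
lemma drop_first (hC : IsSimpleCycle E ℓ c) (hl : 4 ≤ ℓ)
    (hsub : cycS c ℓ ℓ ⊆ c 2) : IsSimpleCycle E (ℓ - 1) (fun t => c (t + 1)) := by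
  obtain ⟨hl3, hmem, hS⟩ := hC
  refine ⟨by omega, fun i hi1 hi2 => hmem (i + 1) (by omega) (by omega), ?_⟩
  intro p q r hp hpq hqr hr e he
  have hDs1 : ∀ t, 1 ≤ t → t ≤ ℓ - 2 →
      cycS (fun t => c (t + 1)) (ℓ - 1) t = cycS c ℓ (t + 1) := by
    intro t ht1 ht2
    rw [cycS_of_ne (by omega : t ≠ ℓ - 1), cycS_of_ne (by omega : t + 1 ≠ ℓ)]
  have hD : cycS (fun t => c (t + 1)) (ℓ - 1) (ℓ - 1) = c ℓ ∩ c 2 := by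
    rw [cycS_self]
    show c (ℓ - 1 + 1) ∩ c (1 + 1) = _
    rw [show ℓ - 1 + 1 = ℓ by omega, show (1:ℕ) + 1 = 2 by norm_num]
  have hDs2 : cycS c ℓ ℓ ⊆ cycS (fun t => c (t + 1)) (ℓ - 1) (ℓ - 1) := by
    rw [hD]
    refine Finset.subset_inter ?_ hsub
    rw [cycS_self]; exact Finset.inter_subset_left
  by_cases hrr : r ≤ ℓ - 2
  · rw [hDs1 p hp (by omega), hDs1 q (by omega) (by omega), hDs1 r (by omega) hrr]
    exact hS (p+1) (q+1) (r+1) (by omega) (by omega) (by omega) (by omega) e he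
  · have hre : r = ℓ - 1 := by omega
    subst hre
    rw [hDs1 p hp (by omega), hDs1 q (by omega) (by omega)]
    refine nonempty_sdiff_mono
      (Finset.union_subset_union (le_refl _) hDs2)
      (hS (p+1) (q+1) ℓ (by omega) (by omega) (by omega) (by omega) e he)

end Stmt15Aux2

section Stmt15Aux3

variable {E : Finset (Finset N)} {ℓ : ℕ} {c : ℕ → Finset N}

/-- Descent: a point of `e₁ \ e₂` cannot lie on a later cycle edge
(up to `e_{ℓ-1}`) when the cycle is a Σ-maximal minimum simple cycle. -/
lemma descent (hC : IsSimpleCycle E ℓ c) (hl : 4 ≤ ℓ)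
    (hmin : ∀ ℓ' c', IsSimpleCycle E ℓ' c' → ℓ ≤ ℓ')
    (hmax : ∀ c', IsSimpleCycle E ℓ c' → Ssum ℓ c' ≤ Ssum ℓ c)
    {z : N} (hz1 : z ∈ c 1) (hz2 : z ∉ c 2) :
    ∀ y, 3 ≤ y → y ≤ ℓ - 1 → z ∈ c y → False := by
  intro y
  induction y using Nat.strong_induction_on with
  | _ y IH =>
  intro hy3 hyl hzy
  classical
  by_cases hfail : ∃ e ∈ E,
      cycS c ℓ (y - 2) ∪ cycS c ℓ (y - 1) ∪ (c y ∩ c 1) ⊆ e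
  · obtain ⟨h, hh, hsub⟩ := hfail
    have hs1 : cycS c ℓ (y - 2) ⊆ h :=
      (Finset.subset_union_left.trans Finset.subset_union_left).trans hsub
    have hs2 : cycS c ℓ (y - 2 + 1) ⊆ h := by
      rw [show y - 2 + 1 = y - 1 by omega]
      exact (Finset.subset_union_right.trans Finset.subset_union_left).trans hsub
    have hr := replace_rigid hC hmax (a := y - 2) (by omega) (by omega) hh hs1 hs2
    have h2 : h ∩ c y = cycS c ℓ (y - 1) := by
      have := hr.2
      rwa [show y - 2 + 1 = y - 1 by omega, show y - 2 + 2 = y by omega] at this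
    have hzh : z ∈ h := hsub (Finset.mem_union_right _ (Finset.mem_inter.2 ⟨hzy, hz1⟩))
    have hz' : z ∈ cycS c ℓ (y - 1) := by
      rw [← h2]; exact Finset.mem_inter.2 ⟨hzh, hzy⟩
    by_cases hy4 : 4 ≤ y
    · exact IH (y - 1) (by omega) (by omega) (by omega)
        (cycS_subset_fst c ℓ (y - 1) hz')
    · have hy : y = 3 := by omega
      have : z ∈ c 2 := by
        have := cycS_subset_fst c ℓ (y - 1) hz'
        rwa [show y - 1 = 2 by omega] at this
      exact hz2 this
  · push_neg at hfail
    have hLG : LG E y c := by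
      refine ⟨hy3, fun i hi1 hi2 => hC.2.1 i hi1 (by omega), ?_⟩
      intro Y hY1 hY2 e he
      have hYs : ∀ t, 1 ≤ t → t + 1 ≤ y → cycS c y t = cycS c ℓ t := by
        intro t ht1 ht2
        rw [cycS_of_ne (by omega : t ≠ y), cycS_of_ne (by omega : t ≠ ℓ)]
      by_cases hY : Y + 2 ≤ y - 1
      · rw [hYs Y hY1 (by omega), hYs (Y+1) (by omega) (by omega),
          hYs (Y+2) (by omega) (by omega)]
        exact hC.2.2 Y (Y+1) (Y+2) hY1 (by omega) (by omega) (by omega) e he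
      · have hYe : Y + 2 = y := by omega
        rw [hYs Y hY1 (by omega), hYs (Y+1) (by omega) (by omega), hYe, cycS_self]
        rw [Finset.sdiff_nonempty]
        intro hcon
        refine hfail e he ?_
        rwa [show y - 2 = Y by omega, show y - 1 = Y + 1 by omega]
    obtain ⟨m', c', h3, hle, hsc⟩ := LG_to_simple hLG
    have := hmin m' c' hsc
    omega

/-- A corner point of `s_ℓ` avoiding `e₂` avoids all middle corner sets. -/
lemma corner_mid (hC : IsSimpleCycle E ℓ c) (hl : 4 ≤ ℓ)
    (hmin : ∀ ℓ' c', IsSimpleCycle E ℓ' c' → ℓ ≤ ℓ')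
    (hmax : ∀ c', IsSimpleCycle E ℓ c' → Ssum ℓ c' ≤ Ssum ℓ c)
    {u : N} (hu : u ∈ cycS c ℓ ℓ) (hu2 : u ∉ c 2) :
    ∀ x, 2 ≤ x → x ≤ ℓ - 1 → u ∉ cycS c ℓ x := by
  intro x hx2 hx1 hux
  have hz1 : u ∈ c 1 := cycS_last_subset c ℓ hu
  by_cases hx : x = 2
  · refine hu2 ?_
    have := cycS_subset_fst c ℓ x hux
    rwa [hx] at this
  · by_cases hxl : x ≤ ℓ - 2
    · refine descent hC hl hmin hmax hz1 hu2 (x + 1) (by omega) (by omega) ?_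
      exact cycS_subset_snd (by omega : x ≠ ℓ) hux
    · have hxe : x = ℓ - 1 := by omega
      refine descent hC hl hmin hmax hz1 hu2 x (by omega) (by omega) ?_
      exact cycS_subset_fst c ℓ x hux

/-- Chain descent killing bad edges containing `w`. -/
lemma chain (hC : IsSimpleCycle E ℓ c) (hl : 4 ≤ ℓ)
    (hmin : ∀ ℓ' c', IsSimpleCycle E ℓ' c' → ℓ ≤ ℓ')
    (hmax : ∀ c', IsSimpleCycle E ℓ c' → Ssum ℓ c' ≤ Ssum ℓ c)
    {w : N} (hw2 : w ∈ c 2) (hwnot : w ∉ cycS c ℓ 2) :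
    ∀ j, 2 ≤ j → j ≤ ℓ - 2 → ∀ g ∈ E, w ∈ g →
      cycS c ℓ j ⊆ g → cycS c ℓ (j + 1) ⊆ g → c ℓ ∩ c 2 ⊆ g → False := by
  intro j
  induction j using Nat.strong_induction_on with
  | _ j IH =>
  intro hj2 hjl g hg hwg hsj hsj1 hsT
  classical
  by_cases hj : j = 2
  · subst hj
    have hr := replace_rigid hC hmax (a := 2) (by omega) (by omega) hg hsj hsj1
    exact hwnot (hr.1 ▸ Finset.mem_inter.2 ⟨hw2, hwg⟩)
  · -- j ≥ 3 : build the shortcut list and recurse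
    by_cases hfail : ∃ h ∈ E,
        cycS c ℓ (j - 1) ∪ (c j ∩ g) ∪ (g ∩ c 2) ⊆ h
    · obtain ⟨h, hh, hsub⟩ := hfail
      have hA : cycS c ℓ (j - 1) ⊆ h :=
        (Finset.subset_union_left.trans Finset.subset_union_left).trans hsub
      have hB : cycS c ℓ (j - 1 + 1) ⊆ h := by
        rw [show j - 1 + 1 = j by omega]
        refine subset_trans ?_
          ((Finset.subset_union_right.trans Finset.subset_union_left).trans hsub)
        exact Finset.subset_inter (cycS_subset_fst c ℓ j) hsj
      have hT : c ℓ ∩ c 2 ⊆ h :=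
        subset_trans (Finset.subset_inter (fun x hx => hsT hx)
          (fun x hx => Finset.inter_subset_right hx))
          (Finset.subset_union_right.trans hsub)
      have hwh : w ∈ h :=
        hsub (Finset.mem_union_right _ (Finset.mem_inter.2 ⟨hwg, hw2⟩))
      exact IH (j - 1) (by omega) (by omega) (by omega) h hh hwh hA hB hT
    · -- no failure: the shortcut list is locally good, contradiction
      push_neg at hfail
      set F : ℕ → Finset N := fun t => if t ≤ j - 1 then c (t + 1) else g with hF
      have hFmem : ∀ i, 1 ≤ i → i ≤ j → F i ∈ E := by
        intro i hi1 hi2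
        by_cases hij : i ≤ j - 1
        · simp only [hF, if_pos hij]; exact hC.2.1 (i + 1) (by omega) (by omega)
        · simp only [hF, if_neg hij]; exact hg
      have hFs : ∀ t, 1 ≤ t → t + 1 ≤ j - 1 → cycS F j t = cycS c ℓ (t + 1) := by
        intro t ht1 ht2
        rw [cycS_of_ne (by omega : t ≠ j), cycS_of_ne (by omega : t + 1 ≠ ℓ)]
        simp only [hF, if_pos (by omega : t ≤ j - 1), if_pos (by omega : t + 1 ≤ j - 1)]
      have hFj1 : cycS F j (j - 1) = c j ∩ g := by
        rw [cycS_of_ne (by omega : j - 1 ≠ j)]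
        simp only [hF, if_pos (le_refl (j-1)), if_neg (by omega : ¬ j - 1 + 1 ≤ j - 1)]
        rw [show j - 1 + 1 = j by omega]
      have hFj : cycS F j j = g ∩ c 2 := by
        rw [cycS_self]
        simp only [hF, if_neg (by omega : ¬ j ≤ j - 1), if_pos (by omega : 1 ≤ j - 1)]
      have hFsup : ∀ t, 1 ≤ t → t ≤ j - 1 → cycS c ℓ (t + 1) ⊆ cycS F j t := by
        intro t ht1 ht2
        by_cases ht : t + 1 ≤ j - 1
        · rw [hFs t ht1 ht]
        · have : t = j - 1 := by omega
          subst this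
          rw [hFj1, show j - 1 + 1 = j by omega]
          exact Finset.subset_inter (cycS_subset_fst c ℓ j) hsj
      have hLG : LG E j F := by
        refine ⟨by omega, hFmem, ?_⟩
        intro Y hY1 hY2 e he
        by_cases hY : Y + 2 ≤ j - 1
        · refine nonempty_sdiff_mono (Finset.union_subset_union
            (Finset.union_subset_union (hFsup Y hY1 (by omega))
              (hFsup (Y+1) (by omega) (by omega))) (hFsup (Y+2) (by omega) hY)) ?_
          exact hC.2.2 (Y+1) (Y+2) (Y+3) (by omega) (by omega) (by omega)
            (by omega) e he
        · have hYe : Y + 2 = j := by omega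
          have hYv : Y = j - 2 := by omega
          rw [show Y + 1 = j - 1 by omega, hYe, hFj1, hFj]
          rw [Finset.sdiff_nonempty]
          intro hcon
          refine hfail e he ?_
          refine subset_trans (Finset.union_subset_union (Finset.union_subset_union
            ?_ (le_refl _)) (le_refl _)) hcon
          rw [hYv, hFs (j - 2) (by omega) (by omega), show j - 2 + 1 = j - 1 by omega]
      obtain ⟨m', c', h3, hle, hsc⟩ := LG_to_simple hLG
      have := hmin m' c' hsc
      omega

end Stmt15Aux3

section Stmt15Aux4

variable {E : Finset (Finset N)} {ℓ : ℕ}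

/-- The contraction map on edges. -/
def kap (u w : N) (e : Finset N) : Finset N :=
  if w ∈ e then e.erase w ∪ {u} else e

lemma mem_kap {u w x : N} {e : Finset N} (hx : x ∈ e) (hxw : x ≠ w) :
    x ∈ kap u w e := by
  unfold kap
  split
  · exact Finset.mem_union_left _ (Finset.mem_erase.2 ⟨hxw, hx⟩)
  · exact hx

lemma u_mem_kap {u w : N} {e : Finset N} (h : w ∈ e) : u ∈ kap u w e := by
  unfold kap
  rw [if_pos h]
  exact Finset.mem_union_right _ (Finset.mem_singleton_self u)

lemma kap_mem_contrE {u w : N} {e : Finset N} (he : e ∈ E) (hne : e ≠ {u, w}) :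
    kap u w e ∈ contrE E u w := by
  unfold kap contrE
  by_cases hw : w ∈ e
  · rw [if_pos hw]
    refine Finset.mem_union_right _ (Finset.mem_image.2 ⟨e, ?_, rfl⟩)
    exact Finset.mem_filter.2 ⟨he, hw, hne⟩
  · rw [if_neg hw]
    exact Finset.mem_union_left _ (Finset.mem_filter.2 ⟨he, hw⟩)

lemma contrE_classify {u w : N} {e' : Finset N} (h : e' ∈ contrE E u w) :
    ∃ g ∈ E, (∀ x ∈ e', x ≠ u → x ∈ g) ∧ (u ∈ e' → u ∈ g ∨ w ∈ g) := by
  unfold contrE at h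
  rcases Finset.mem_union.1 h with h' | h'
  · obtain ⟨hg, -⟩ := Finset.mem_filter.1 h'
    exact ⟨e', hg, fun x hx _ => hx, fun hu => Or.inl hu⟩
  · obtain ⟨g, hgmem, rfl⟩ := Finset.mem_image.1 h'
    obtain ⟨hg, hwg, -⟩ := Finset.mem_filter.1 hgmem
    refine ⟨g, hg, ?_, fun _ => Or.inr hwg⟩
    intro x hx hxu
    rcases Finset.mem_union.1 hx with hx' | hx'
    · exact (Finset.mem_erase.1 hx').2
    · exact absurd (Finset.mem_singleton.1 hx') hxu

/-- Existence of a Σ-maximal simple cycle of length ℓ. -/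
lemma exists_max_cycle (V : Finset N) (hVsub : ∀ e ∈ E, e ⊆ V)
    (hex : ∃ c, IsSimpleCycle E ℓ c) :
    ∃ c, IsSimpleCycle E ℓ c ∧
      ∀ c', IsSimpleCycle E ℓ c' → Ssum ℓ c' ≤ Ssum ℓ c := by
  classical
  have hbound : ∀ c', IsSimpleCycle E ℓ c' → Ssum ℓ c' ≤ ℓ * V.card := by
    intro c' h'
    have : ∀ i ∈ Finset.Icc 1 ℓ, (cycS c' ℓ i).card ≤ V.card := by
      intro i hi
      rw [Finset.mem_Icc] at hi
      refine Finset.card_le_card ?_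
      exact (cycS_subset_fst c' ℓ i).trans (hVsub _ (h'.2.1 i hi.1 hi.2))
    calc Ssum ℓ c' ≤ ∑ _i ∈ Finset.Icc 1 ℓ, V.card := Finset.sum_le_sum this
      _ = (Finset.Icc 1 ℓ).card * V.card := by rw [Finset.sum_const, smul_eq_mul]
      _ ≤ ℓ * V.card := by
          refine Nat.mul_le_mul_right _ ?_
          rw [Nat.card_Icc]
          omega
  set P : ℕ → Prop := fun n => ∃ c, IsSimpleCycle E ℓ c ∧ Ssum ℓ c = n with hP
  obtain ⟨c0, hc0⟩ := hex
  have hP0 : P (Ssum ℓ c0) := ⟨c0, hc0, rfl⟩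
  have hspec := Nat.findGreatest_spec (hbound c0 hc0) hP0
  obtain ⟨c, hc, hcs⟩ := hspec
  refine ⟨c, hc, ?_⟩
  intro c' h'
  rw [hcs]
  exact Nat.le_findGreatest (hbound c' h') ⟨c', h', rfl⟩

end Stmt15Aux4







theorem stmt15 {N : Type*} [DecidableEq N] [Infinite N]
    (V : Finset N) (E : Finset (Finset N))
    (hcard : ∀ e ∈ E, 2 ≤ e.card) (hVsub : ∀ e ∈ E, e ⊆ V)
    (hcover : ∀ v ∈ V, ∃ e ∈ E, v ∈ e)
    (ℓ : ℕ) (hex : ∃ c, IsSimpleCycle E ℓ c)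
    (hmin : ∀ ℓ' c, IsSimpleCycle E ℓ' c → ℓ ≤ ℓ')
    (hl : 4 ≤ ℓ) :
    ∃ G' : Finset N × Finset (Finset N),
      Relation.ReflTransGen Step (V, E) G' ∧
        ∃ ℓ' c', ℓ' ≤ ℓ - 1 ∧ IsSimpleCycle G'.2 ℓ' c' := by
  classical
  obtain ⟨C, hC, hmax⟩ := exists_max_cycle V hVsub hex
  have hl3 : 3 ≤ ℓ := by omega
  -- the `u` corner point
  have hU : (cycS C ℓ ℓ \ C 2).Nonempty := by
    rw [Finset.sdiff_nonempty]
    intro hsub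
    have hd := drop_first hC hl hsub
    have := hmin (ℓ - 1) _ hd
    omega
  obtain ⟨u, hu'⟩ := hU
  rw [Finset.mem_sdiff] at hu'
  obtain ⟨huL, hu2⟩ := hu'
  -- the `w` corner point, via the reversed cycle
  have hCrev : IsSimpleCycle E ℓ (revC ℓ C) := revC_simple hC
  have hmaxrev : ∀ c', IsSimpleCycle E ℓ c' → Ssum ℓ c' ≤ Ssum ℓ (revC ℓ C) := by
    intro c' h'
    rw [revC_Ssum hl3]
    exact hmax c' h'
  have hW : (cycS (revC ℓ C) ℓ ℓ \ (revC ℓ C) 2).Nonempty := by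
    rw [Finset.sdiff_nonempty]
    intro hsub
    have hd := drop_first hCrev hl hsub
    have := hmin (ℓ - 1) _ hd
    omega
  obtain ⟨w, hwr'⟩ := hW
  rw [Finset.mem_sdiff] at hwr'
  obtain ⟨hwrL, hwr2⟩ := hwr'
  have hrev2 : revC ℓ C 2 = C ℓ := by
    simp only [revC, if_neg (by omega : (2:ℕ) ≠ 1)]
    rw [show ℓ + 2 - 2 = ℓ by omega]
  have hrevLast : cycS (revC ℓ C) ℓ ℓ = cycS C ℓ 1 := by
    rw [cycS_revC hl3 (by omega) (le_refl ℓ), show ℓ + 1 - ℓ = 1 by omega]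
  have hw1 : w ∈ cycS C ℓ 1 := by rwa [hrevLast] at hwrL
  have hwl : w ∉ C ℓ := by rwa [hrev2] at hwr2
  -- avoid-middle facts
  have huMID : ∀ x, 2 ≤ x → x ≤ ℓ - 1 → u ∉ cycS C ℓ x :=
    corner_mid hC hl hmin hmax huL hu2
  have hwMIDrev := corner_mid hCrev hl hmin hmaxrev hwrL hwr2
  have hwMID : ∀ x, 2 ≤ x → x ≤ ℓ - 1 → w ∉ cycS C ℓ x := by
    intro x hx2 hx1 hwx
    refine hwMIDrev (ℓ + 1 - x) (by omega) (by omega) ?_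
    rw [cycS_revC hl3 (by omega) (by omega), show ℓ + 1 - (ℓ + 1 - x) = x by omega]
    exact hwx
  -- basic memberships
  have huℓ : u ∈ C ℓ := cycS_subset_fst C ℓ ℓ huL
  have hu1 : u ∈ C 1 := cycS_last_subset C ℓ huL
  have hw1' : w ∈ C 1 := cycS_subset_fst C ℓ 1 hw1
  have hw2 : w ∈ C 2 := by
    have := cycS_subset_snd (show (1:ℕ) ≠ ℓ by omega) hw1
    rwa [show (1:ℕ) + 1 = 2 by norm_num] at this
  have huw : u ≠ w := fun h => hu2 (h ▸ hw2)
  have hC1mem : C 1 ∈ E := hC.2.1 1 le_rfl (by omega)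
  have huV : u ∈ V := hVsub _ hC1mem hu1
  have hwV : w ∈ V := hVsub _ hC1mem hw1'
  have hwnot2 : w ∉ cycS C ℓ 2 := hwMID 2 (le_refl 2) (by omega)
  -- cycle edges are not `{u, w}`
  have edge_ne : ∀ i, 2 ≤ i → i ≤ ℓ → C i ≠ ({u, w} : Finset N) := by
    intro i hi2 hil heq
    by_cases hi2' : i = 2
    · refine hu2 ?_
      rw [← hi2'] at *
      rw [heq]
      exact Finset.mem_insert_self u {w}
    · by_cases hil' : i = ℓ
      · refine hwl ?_
        rw [← hil']
        rw [heq]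
        exact Finset.mem_insert_of_mem (Finset.mem_singleton_self w)
      · -- 3 ≤ i ≤ ℓ - 1 : both adjacent corner sets would be empty
        have hmem_uw : ∀ x ∈ ({u, w} : Finset N), x = u ∨ x = w := by
          intro x hx
          rcases Finset.mem_insert.1 hx with h | h
          · exact Or.inl h
          · exact Or.inr (Finset.mem_singleton.1 h)
        have hs1 : cycS C ℓ (i - 1) = ∅ := by
          rw [Finset.eq_empty_iff_forall_notMem]
          intro x hx
          have hxi : x ∈ C i := by
            have := cycS_subset_snd (show i - 1 ≠ ℓ by omega) hx
            rwa [show i - 1 + 1 = i by omega] at this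
          rcases hmem_uw x (heq ▸ hxi) with rfl | rfl
          · exact huMID (i - 1) (by omega) (by omega) hx
          · exact hwMID (i - 1) (by omega) (by omega) hx
        have hs2 : cycS C ℓ i = ∅ := by
          rw [Finset.eq_empty_iff_forall_notMem]
          intro x hx
          have hxi : x ∈ C i := cycS_subset_fst C ℓ i hx
          rcases hmem_uw x (heq ▸ hxi) with rfl | rfl
          · exact huMID i (by omega) (by omega) hx
          · exact hwMID i (by omega) (by omega) hx
        obtain ⟨x, hx⟩ := hC.2.2 (i - 1) i ℓ (by omega) (by omega) (by omega)
          (le_refl ℓ) (C ℓ) (hC.2.1 ℓ (by omega) (le_refl ℓ))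
        rw [Finset.mem_sdiff, hs1, hs2] at hx
        obtain ⟨hx1, hx2⟩ := hx
        rcases Finset.mem_union.1 hx1 with hx' | hx'
        · rcases Finset.mem_union.1 hx' with hx'' | hx''
          · exact absurd hx'' (Finset.notMem_empty x)
          · exact absurd hx'' (Finset.notMem_empty x)
        · exact hx2 (cycS_subset_fst C ℓ ℓ hx')
  -- the contracted cycle list
  set C' : ℕ → Finset N := fun t => kap u w (C (t + 1)) with hC'def
  have hlow : ∀ t, 1 ≤ t → t ≤ ℓ - 2 → cycS C ℓ (t + 1) ⊆ cycS C' (ℓ - 1) t := by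
    intro t ht1 ht2
    rw [cycS_of_ne (by omega : t ≠ ℓ - 1)]
    intro x hx
    have hx1 : x ∈ C (t + 1) := cycS_subset_fst C ℓ (t + 1) hx
    have hx2 : x ∈ C (t + 1 + 1) := cycS_subset_snd (by omega : t + 1 ≠ ℓ) hx
    have hxw : x ≠ w := by
      intro h
      exact hwMID (t + 1) (by omega) (by omega) (h ▸ hx)
    exact Finset.mem_inter.2 ⟨mem_kap hx1 hxw, mem_kap hx2 hxw⟩
  have hcornerEq : cycS C' (ℓ - 1) (ℓ - 1) = kap u w (C ℓ) ∩ kap u w (C 2) := by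
    rw [cycS_self]
    simp only [hC'def]
    rw [show ℓ - 1 + 1 = ℓ by omega, show (1:ℕ) + 1 = 2 by norm_num]
  have hcornerT : C ℓ ∩ C 2 ⊆ cycS C' (ℓ - 1) (ℓ - 1) := by
    rw [hcornerEq]
    intro x hx
    rw [Finset.mem_inter] at hx
    have hxw : x ≠ w := fun h => hwl (h ▸ hx.1)
    exact Finset.mem_inter.2 ⟨mem_kap hx.1 hxw, mem_kap hx.2 hxw⟩
  have hcornerU : u ∈ cycS C' (ℓ - 1) (ℓ - 1) := by
    rw [hcornerEq]
    exact Finset.mem_inter.2 ⟨mem_kap huℓ huw, u_mem_kap hw2⟩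
  have hLG : LG (contrE E u w) (ℓ - 1) C' := by
    refine ⟨by omega, ?_, ?_⟩
    · intro t ht1 ht2
      simp only [hC'def]
      exact kap_mem_contrE (hC.2.1 (t + 1) (by omega) (by omega))
        (edge_ne (t + 1) (by omega) (by omega))
    · intro Y hY1 hY2 e' he'
      obtain ⟨g, hg, hXg, hUg⟩ := contrE_classify he'
      rw [Finset.sdiff_nonempty]
      intro hcon
      have hconA : cycS C' (ℓ - 1) Y ⊆ e' :=
        (Finset.subset_union_left.trans Finset.subset_union_left).trans hcon
      have hconB : cycS C' (ℓ - 1) (Y + 1) ⊆ e' :=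
        (Finset.subset_union_right.trans Finset.subset_union_left).trans hcon
      have hconC : cycS C' (ℓ - 1) (Y + 2) ⊆ e' := Finset.subset_union_right.trans hcon
      by_cases hY : Y + 2 ≤ ℓ - 2
      · -- three middle corner sets inside g : contradicts (S)
        have h1 : cycS C ℓ (Y + 1) ⊆ g := by
          intro x hx
          refine hXg x (hconA (hlow Y hY1 (by omega) hx)) ?_
          exact fun h => huMID (Y + 1) (by omega) (by omega) (h ▸ hx)
        have h2 : cycS C ℓ (Y + 2) ⊆ g := by
          intro x hx
          have hx' : x ∈ cycS C ℓ (Y + 1 + 1) := by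
            rwa [show Y + 1 + 1 = Y + 2 by omega]
          refine hXg x (hconB (hlow (Y + 1) (by omega) (by omega) hx')) ?_
          exact fun h => huMID (Y + 2) (by omega) (by omega) (h ▸ hx)
        have h3 : cycS C ℓ (Y + 3) ⊆ g := by
          intro x hx
          have hx' : x ∈ cycS C ℓ (Y + 2 + 1) := by
            rwa [show Y + 2 + 1 = Y + 3 by omega]
          refine hXg x (hconC (hlow (Y + 2) (by omega) (by omega) hx')) ?_
          exact fun h => huMID (Y + 3) (by omega) (by omega) (h ▸ hx)
        obtain ⟨x, hx⟩ := hC.2.2 (Y + 1) (Y + 2) (Y + 3) (by omega) (by omega)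
          (by omega) (by omega) g hg
        rw [Finset.mem_sdiff] at hx
        obtain ⟨hx1, hx2⟩ := hx
        rcases Finset.mem_union.1 hx1 with hx' | hx'
        · rcases Finset.mem_union.1 hx' with hx'' | hx''
          · exact hx2 (h1 hx'')
          · exact hx2 (h2 hx'')
        · exact hx2 (h3 hx')
      · -- the corner triple : Y = ℓ - 3
        have hYe : Y = ℓ - 3 := by omega
        have hsA : cycS C ℓ (ℓ - 2) ⊆ g := by
          intro x hx
          have hx' : x ∈ cycS C ℓ (Y + 1) := by rwa [show Y + 1 = ℓ - 2 by omega]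
          refine hXg x (hconA (hlow Y hY1 (by omega) hx')) ?_
          exact fun h => huMID (ℓ - 2) (by omega) (by omega) (h ▸ hx)
        have hsB : cycS C ℓ (ℓ - 2 + 1) ⊆ g := by
          intro x hx
          have hx' : x ∈ cycS C ℓ (Y + 1 + 1) := by
            rwa [show Y + 1 + 1 = ℓ - 2 + 1 by omega]
          refine hXg x (hconB (hlow (Y + 1) (by omega) (by omega) hx')) ?_
          refine fun h => huMID (ℓ - 1) (by omega) (by omega) ?_
          rwa [h, show ℓ - 2 + 1 = ℓ - 1 by omega] at hx
        have hconC' : cycS C' (ℓ - 1) (ℓ - 1) ⊆ e' := by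
          rw [show Y + 2 = ℓ - 1 by omega] at hconC
          exact hconC
        have hsT : C ℓ ∩ C 2 ⊆ g := by
          intro x hx
          refine hXg x (hconC' (hcornerT hx)) ?_
          exact fun h => hu2 (h ▸ (Finset.mem_inter.1 hx).2)
        have hue' : u ∈ e' := hconC' hcornerU
        rcases hUg hue' with hug | hwg
        · -- u ∈ g : rigidity kills it
          have hr := replace_rigid hC hmax (a := ℓ - 2) (by omega) (by omega) hg hsA hsB
          have h2 := hr.2
          rw [show ℓ - 2 + 2 = ℓ by omega, show ℓ - 2 + 1 = ℓ - 1 by omega] at h2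
          refine huMID (ℓ - 1) (by omega) (le_refl _) ?_
          rw [← h2]
          exact Finset.mem_inter.2 ⟨hug, huℓ⟩
        · -- w ∈ g : chain descent kills it
          have hsB' : cycS C ℓ (ℓ - 2 + 1) ⊆ g := hsB
          exact chain hC hl hmin hmax hw2 hwnot2 (ℓ - 2) (by omega) (le_refl _)
            g hg hwg hsA hsB' hsT
  obtain ⟨m', c'', h3, hle, hsc⟩ := LG_to_simple hLG
  refine ⟨(V.erase w, contrE E u w), Relation.ReflTransGen.single ?_, m', c'', by omega, hsc⟩
  exact Step.contract V E u w huV hwV huw ⟨C 1, hC1mem, hu1, hw1'⟩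

end BPO
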